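/- Let A be a diagonal positive definite n×n matrix with eigenvalues 0 < a₁ ≤ … ≤ a_n, let r = r_A(x) = √(Σ_{j=1}^n a_j x_j²), and let w(x) = φ(r_A(x)) be a C² generalized radially symmetric function with respect to A, with h(r) = φ′(r)/r. If h > 0 and h′ ≤ 0, then the eigenvalues of the Hessian satisfy a_i h + r^{−1}h′ Σ_{j=1}^n a_j² x_j² ≤ λ_i(D²w) ≤ a_i h for every i = 1, …, n. Moreover, if in addition a₁h + a_n r h′ ≥ 0 and ε₀ ≥ 0, then Σ_{i=1}^n arctan λ_i(D²w) ≥ g(ā_{ε₀}), where g(λ₁,…,λ_n) = Σ_{i=1}^n arctan λ_i and ā_{ε₀} = (a₁h + a_n r h′, a₂(h + ε₀ r h′), …, a_n(h + ε₀ r h′)). -/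

import Mathlib

open Real Filter Set Metric Bornology Finset

noncomputable section

/-- Eigenvalues of a real symmetric matrix (junk value if the matrix is not symmetric). -/
def symEigs {n : ℕ} (A : Matrix (Fin n) (Fin n) ℝ) : Fin n → ℝ :=
  if h : A.IsHermitian then h.eigenvalues else fun _ => 0

/-- Eigenvalues of a real symmetric matrix listed in increasing order. -/
def sortedEigs {n : ℕ} (A : Matrix (Fin n) (Fin n) ℝ) : Fin n → ℝ :=
  fun i => symEigs A (Tuple.sort (symEigs A) i)

/-- `r_A(x) = √(Σ aⱼ xⱼ²)`. -/
def rA {n : ℕ} (a : Fin n → ℝ) (x : EuclideanSpace ℝ (Fin n)) : ℝ :=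
  Real.sqrt (∑ j, a j * x j ^ 2)

/-- The Hessian `D_{ij}w = aᵢ h δ_{ij} + r⁻¹ h' (aᵢxᵢ)(aⱼxⱼ)` of a generalized radially
symmetric function `w = φ(r_A(x))`, where `H = h(r)` and `H' = h'(r)` at `r = r_A(x)`. -/
def grsHess {n : ℕ} (a : Fin n → ℝ) (H H' : ℝ) (x : EuclideanSpace ℝ (Fin n)) :
    Matrix (Fin n) (Fin n) ℝ :=
  Matrix.of fun i j =>
    a i * H * (if i = j then 1 else 0) + (rA a x)⁻¹ * H' * (a i * x i) * (a j * x j)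

/-! ### Auxiliary lemmas -/

namespace Stmt12Aux

variable {n : ℕ}

/-- Quadratic form of a matrix. -/
def qf (A : Matrix (Fin n) (Fin n) ℝ) (u : EuclideanSpace ℝ (Fin n)) : ℝ :=
  inner ℝ u (Matrix.toEuclideanLin A u)

lemma qf_eq_matrix (A : Matrix (Fin n) (Fin n) ℝ) (u : EuclideanSpace ℝ (Fin n)) :
    qf A u = ∑ j, ∑ k, u j * A j k * u k := by
  unfold qf
  simp only [PiLp.inner_apply, RCLike.inner_apply, conj_trivial]
  refine Finset.sum_congr rfl fun j _ => ?_
  have : (Matrix.toEuclideanLin A u) j = ∑ k, A j k * u k := by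
    simp [Matrix.toEuclideanLin_apply, Matrix.mulVec, dotProduct]
  rw [this, Finset.sum_mul]
  exact Finset.sum_congr rfl fun k _ => by ring

lemma toEuclideanLin_eigen (A : Matrix (Fin n) (Fin n) ℝ) (hA : A.IsHermitian) (j : Fin n) :
    Matrix.toEuclideanLin A (hA.eigenvectorBasis j)
      = hA.eigenvalues j • (hA.eigenvectorBasis j) := by
  have := hA.mulVec_eigenvectorBasis j
  apply PiLp.ext; intro k
  have h2 := congrFun this k
  simpa [Matrix.toEuclideanLin_apply] using h2

lemma qf_eq_eigen (A : Matrix (Fin n) (Fin n) ℝ) (hA : A.IsHermitian)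
    (u : EuclideanSpace ℝ (Fin n)) :
    qf A u = ∑ k, hA.eigenvalues k * (inner ℝ (hA.eigenvectorBasis k) u : ℝ)^2 := by
  set b := hA.eigenvectorBasis with hb
  have hsym : (Matrix.toEuclideanLin A).IsSymmetric := (Matrix.isHermitian_iff_isSymmetric).1 hA
  have := b.sum_inner_mul_inner u (Matrix.toEuclideanLin A u)
  rw [qf, ← this]
  refine Finset.sum_congr rfl fun k _ => ?_
  have h1 : (inner ℝ (b k) (Matrix.toEuclideanLin A u) : ℝ)
      = (inner ℝ (Matrix.toEuclideanLin A (b k)) u : ℝ) := (hsym (b k) u).symm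
  rw [h1, toEuclideanLin_eigen A hA k, inner_smul_left]
  have : (inner ℝ u (b k) : ℝ) = (inner ℝ (b k) u : ℝ) := real_inner_comm _ _
  simp [this]
  ring

lemma nsq_eq_eigen (b : OrthonormalBasis (Fin n) ℝ (EuclideanSpace ℝ (Fin n)))
    (u : EuclideanSpace ℝ (Fin n)) :
    (inner ℝ u u : ℝ) = ∑ k, (inner ℝ (b k) u : ℝ)^2 := by
  rw [← b.sum_inner_mul_inner u u]
  refine Finset.sum_congr rfl fun k _ => ?_
  rw [real_inner_comm u (b k)]; ring

lemma coeff_vanish (b : OrthonormalBasis (Fin n) ℝ (EuclideanSpace ℝ (Fin n)))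
    (s : Finset (Fin n)) (u : EuclideanSpace ℝ (Fin n))
    (hu : u ∈ Submodule.span ℝ (⇑b '' ↑s)) (j : Fin n) (hj : j ∉ s) :
    (inner ℝ (b j) u : ℝ) = 0 := by
  have hle : Submodule.span ℝ (⇑b '' ↑s) ≤ LinearMap.ker (innerSL ℝ (b j)).toLinearMap := by
    rw [Submodule.span_le]
    rintro w ⟨k, hk, rfl⟩
    simp only [SetLike.mem_coe, LinearMap.mem_ker, ContinuousLinearMap.coe_coe, innerSL_apply_apply]
    exact b.orthonormal.2 (fun h => hj (h ▸ hk))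
  simpa using hle hu

lemma finrank_span_basis (b : OrthonormalBasis (Fin n) ℝ (EuclideanSpace ℝ (Fin n)))
    (s : Finset (Fin n)) :
    Module.finrank ℝ (Submodule.span ℝ (⇑b '' ↑s)) = s.card := by
  have hli : LinearIndependent ℝ (⇑b ∘ (Subtype.val : ↥(↑s : Set (Fin n)) → Fin n)) :=
    b.orthonormal.linearIndependent.comp _ Subtype.val_injective
  have := finrank_span_eq_card hli
  rw [Set.range_comp, Subtype.range_val] at this
  simpa [Set.finrank] using this

lemma exists_common (U V : Submodule ℝ (EuclideanSpace ℝ (Fin n)))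
    (h : n < Module.finrank ℝ U + Module.finrank ℝ V) :
    ∃ u : EuclideanSpace ℝ (Fin n), u ≠ 0 ∧ u ∈ U ∧ u ∈ V := by
  have hsum := Submodule.finrank_sup_add_finrank_inf_eq U V
  have hsup : Module.finrank ℝ ↥(U ⊔ V) ≤ n := by
    have := Submodule.finrank_le (U ⊔ V)
    simpa [finrank_euclideanSpace] using this
  have hinf : 0 < Module.finrank ℝ ↥(U ⊓ V) := by omega
  have hne : U ⊓ V ≠ ⊥ := by
    intro hbot
    rw [hbot] at hinf
    simp at hinf
  obtain ⟨u, hu, hune⟩ := Submodule.exists_mem_ne_zero_of_ne_bot hne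
  exact ⟨u, hune, hu.1, hu.2⟩

lemma rayleigh_le (A : Matrix (Fin n) (Fin n) ℝ) (hA : A.IsHermitian) (s : Finset (Fin n))
    (t : ℝ) (ht : ∀ j ∈ s, hA.eigenvalues j ≤ t)
    (u : EuclideanSpace ℝ (Fin n)) (hu : u ∈ Submodule.span ℝ (⇑hA.eigenvectorBasis '' ↑s)) :
    qf A u ≤ t * (inner ℝ u u : ℝ) := by
  rw [qf_eq_eigen A hA u, nsq_eq_eigen hA.eigenvectorBasis u, Finset.mul_sum]
  refine Finset.sum_le_sum fun k _ => ?_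
  by_cases hk : k ∈ s
  · exact mul_le_mul_of_nonneg_right (ht k hk) (sq_nonneg _)
  · rw [coeff_vanish _ s u hu k hk]; simp

lemma rayleigh_ge (A : Matrix (Fin n) (Fin n) ℝ) (hA : A.IsHermitian) (s : Finset (Fin n))
    (t : ℝ) (ht : ∀ j ∈ s, t ≤ hA.eigenvalues j)
    (u : EuclideanSpace ℝ (Fin n)) (hu : u ∈ Submodule.span ℝ (⇑hA.eigenvectorBasis '' ↑s)) :
    t * (inner ℝ u u : ℝ) ≤ qf A u := by
  rw [qf_eq_eigen A hA u, nsq_eq_eigen hA.eigenvectorBasis u, Finset.mul_sum]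
  refine Finset.sum_le_sum fun k _ => ?_
  by_cases hk : k ∈ s
  · exact mul_le_mul_of_nonneg_right (ht k hk) (sq_nonneg _)
  · rw [coeff_vanish _ s u hu k hk]; simp

lemma coord_vanish (s : Finset (Fin n)) (u : EuclideanSpace ℝ (Fin n))
    (hu : u ∈ Submodule.span ℝ (⇑(EuclideanSpace.basisFun (Fin n) ℝ) '' ↑s))
    (j : Fin n) (hj : j ∉ s) : u j = 0 := by
  have := coeff_vanish (EuclideanSpace.basisFun (Fin n) ℝ) s u hu j hj
  rwa [EuclideanSpace.basisFun_apply, EuclideanSpace.inner_single_left, map_one, one_mul] at this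

lemma inner_self_sum (u : EuclideanSpace ℝ (Fin n)) : (inner ℝ u u : ℝ) = ∑ j, u j ^ 2 := by
  simp only [PiLp.inner_apply, RCLike.inner_apply, conj_trivial, sq]

lemma sortedEigs_eq (A : Matrix (Fin n) (Fin n) ℝ) (hA : A.IsHermitian) (i : Fin n) :
    sortedEigs A i = hA.eigenvalues (Tuple.sort (symEigs A) i) := by
  unfold sortedEigs symEigs
  rw [dif_pos hA]

lemma sortedEigs_le {A : Matrix (Fin n) (Fin n) ℝ} (hA : A.IsHermitian) (d : Fin n → ℝ)
    (hd : Monotone d) (hQ : ∀ u : EuclideanSpace ℝ (Fin n), qf A u ≤ ∑ j, d j * (u j)^2)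
    (i : Fin n) : sortedEigs A i ≤ d i := by
  have hsym : ∀ j, hA.eigenvalues j = symEigs A j := by
    intro j; unfold symEigs; rw [dif_pos hA]
  set bF := EuclideanSpace.basisFun (Fin n) ℝ
  set bE := hA.eigenvectorBasis
  set s₁ : Finset (Fin n) := Finset.Iic i
  set s₂ : Finset (Fin n) := (Finset.Ici i).image (Tuple.sort (symEigs A))
  have hcard₁ : s₁.card = i.val + 1 := Fin.card_Iic i
  have hcard₂ : s₂.card = n - i.val := by
    rw [Finset.card_image_of_injective _ (Tuple.sort (symEigs A)).injective, Fin.card_Ici]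
  obtain ⟨u, hune, hu₁, hu₂⟩ := exists_common
      (Submodule.span ℝ (⇑bF '' ↑s₁)) (Submodule.span ℝ (⇑bE '' ↑s₂)) (by
    rw [finrank_span_basis, finrank_span_basis, hcard₁, hcard₂]
    have := i.isLt; omega)
  have hpos : (0:ℝ) < inner ℝ u u :=
    lt_of_not_ge (fun h => hune (real_inner_self_nonpos.mp h))
  have h1 : hA.eigenvalues (Tuple.sort (symEigs A) i) * (inner ℝ u u : ℝ) ≤ qf A u := by
    refine rayleigh_ge A hA s₂ _ (fun j hj => ?_) u hu₂
    obtain ⟨k, hk, rfl⟩ := Finset.mem_image.mp hj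
    have hik : i ≤ k := Finset.mem_Ici.mp hk
    rw [hsym, hsym]
    exact Tuple.monotone_sort (symEigs A) hik
  have h2 : qf A u ≤ d i * (inner ℝ u u : ℝ) := by
    refine (hQ u).trans ?_
    rw [inner_self_sum, Finset.mul_sum]
    have hvan : ∀ j ∈ (Finset.univ : Finset (Fin n)), j ∉ s₁ → d j * u j ^ 2 = 0 := by
      intro j _ hj
      rw [coord_vanish s₁ u hu₁ j hj]; ring
    have hvan' : ∀ j ∈ (Finset.univ : Finset (Fin n)), j ∉ s₁ → d i * u j ^ 2 = 0 := by
      intro j _ hj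
      rw [coord_vanish s₁ u hu₁ j hj]; ring
    rw [← Finset.sum_subset (Finset.subset_univ s₁) hvan,
        ← Finset.sum_subset (Finset.subset_univ s₁) hvan']
    refine Finset.sum_le_sum fun j hj => ?_
    exact mul_le_mul_of_nonneg_right (hd (Finset.mem_Iic.mp hj)) (sq_nonneg _)
  rw [sortedEigs_eq A hA i]
  exact le_of_mul_le_mul_right (h1.trans h2) hpos

lemma le_sortedEigs {A : Matrix (Fin n) (Fin n) ℝ} (hA : A.IsHermitian) (d : Fin n → ℝ)
    (hd : Monotone d) (hQ : ∀ u : EuclideanSpace ℝ (Fin n), ∑ j, d j * (u j)^2 ≤ qf A u)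
    (i : Fin n) : d i ≤ sortedEigs A i := by
  have hsym : ∀ j, hA.eigenvalues j = symEigs A j := by
    intro j; unfold symEigs; rw [dif_pos hA]
  set bF := EuclideanSpace.basisFun (Fin n) ℝ
  set bE := hA.eigenvectorBasis
  set s₁ : Finset (Fin n) := Finset.Ici i
  set s₂ : Finset (Fin n) := (Finset.Iic i).image (Tuple.sort (symEigs A))
  have hcard₁ : s₁.card = n - i.val := Fin.card_Ici i
  have hcard₂ : s₂.card = i.val + 1 := by
    rw [Finset.card_image_of_injective _ (Tuple.sort (symEigs A)).injective, Fin.card_Iic]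
  obtain ⟨u, hune, hu₁, hu₂⟩ := exists_common
      (Submodule.span ℝ (⇑bF '' ↑s₁)) (Submodule.span ℝ (⇑bE '' ↑s₂)) (by
    rw [finrank_span_basis, finrank_span_basis, hcard₁, hcard₂]
    have := i.isLt; omega)
  have hpos : (0:ℝ) < inner ℝ u u :=
    lt_of_not_ge (fun h => hune (real_inner_self_nonpos.mp h))
  have h1 : qf A u ≤ hA.eigenvalues (Tuple.sort (symEigs A) i) * (inner ℝ u u : ℝ) := by
    refine rayleigh_le A hA s₂ _ (fun j hj => ?_) u hu₂
    obtain ⟨k, hk, rfl⟩ := Finset.mem_image.mp hj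
    have hik : k ≤ i := Finset.mem_Iic.mp hk
    rw [hsym, hsym]
    exact Tuple.monotone_sort (symEigs A) hik
  have h2 : d i * (inner ℝ u u : ℝ) ≤ qf A u := by
    refine le_trans ?_ (hQ u)
    rw [inner_self_sum, Finset.mul_sum]
    have hvan : ∀ j ∈ (Finset.univ : Finset (Fin n)), j ∉ s₁ → d j * u j ^ 2 = 0 := by
      intro j _ hj
      rw [coord_vanish s₁ u hu₁ j hj]; ring
    have hvan' : ∀ j ∈ (Finset.univ : Finset (Fin n)), j ∉ s₁ → d i * u j ^ 2 = 0 := by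
      intro j _ hj
      rw [coord_vanish s₁ u hu₁ j hj]; ring
    rw [← Finset.sum_subset (Finset.subset_univ s₁) hvan,
        ← Finset.sum_subset (Finset.subset_univ s₁) hvan']
    refine Finset.sum_le_sum fun j hj => ?_
    exact mul_le_mul_of_nonneg_right (hd (Finset.mem_Ici.mp hj)) (sq_nonneg _)
  rw [sortedEigs_eq A hA i]
  exact le_of_mul_le_mul_right (h2.trans h1) hpos

lemma arctan_shift {p q δ : ℝ} (hp : 0 ≤ p) (hpq : p ≤ q) (hδ : 0 ≤ δ) :
    arctan (q + δ) - arctan q ≤ arctan (p + δ) - arctan p := by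
  set f : ℝ → ℝ := fun t => arctan (t + δ) - arctan t with hf
  have hder : ∀ t : ℝ, HasDerivAt f (1/(1+(t+δ)^2) - 1/(1+t^2)) t := by
    intro t
    have h1 : HasDerivAt (fun t : ℝ => arctan (t + δ)) (1/(1+(t+δ)^2)) t := by
      have := (Real.hasDerivAt_arctan (t + δ)).comp t ((hasDerivAt_id t).add_const δ)
      simpa [Function.comp_def] using this
    exact h1.sub (Real.hasDerivAt_arctan t)
  have hanti : AntitoneOn f (Set.Ici 0) := by
    refine antitoneOn_of_deriv_nonpos (convex_Ici 0) ?_ ?_ ?_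
    · exact Continuous.continuousOn (by continuity)
    · intro t ht
      exact ((hder t).differentiableAt).differentiableWithinAt
    · intro t ht
      rw [(hder t).deriv]
      have ht0 : 0 < t := by simpa using ht
      have : t^2 ≤ (t+δ)^2 := by nlinarith
      have h2 : 1/(1+(t+δ)^2) ≤ 1/(1+t^2) := by
        apply one_div_le_one_div_of_le <;> nlinarith
      linarith
  have := hanti (Set.mem_Ici.mpr hp) (Set.mem_Ici.mpr (hp.trans hpq)) hpq
  simpa [hf] using this

lemma tele {ι : Type*} [DecidableEq ι] : ∀ (s : Finset ι) (d δ : ι → ℝ) (b : ℝ),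
    (∀ i ∈ s, 0 ≤ δ i) → (∀ i ∈ s, b ≤ d i) → (∀ i ∈ s, 0 ≤ d i - δ i) →
    (0 ≤ b - ∑ i ∈ s, δ i) →
    ∑ i ∈ s, (arctan (d i) - arctan (d i - δ i)) ≤ arctan b - arctan (b - ∑ i ∈ s, δ i) := by
  intro s
  induction s using Finset.induction_on with
  | empty => intro d δ b _ _ _ _; simp
  | @insert a s ha ih =>
    intro d δ b hδ hbd hpos hb
    rw [Finset.sum_insert ha] at hb ⊢
    rw [Finset.sum_insert ha]
    have hT : 0 ≤ ∑ i ∈ s, δ i :=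
      Finset.sum_nonneg (fun i hi => hδ i (Finset.mem_insert_of_mem hi))
    have hδa : 0 ≤ δ a := hδ a (Finset.mem_insert_self a s)
    have hp : 0 ≤ b - δ a := by linarith
    have hpq : b - δ a ≤ d a - δ a := by
      have := hbd a (Finset.mem_insert_self a s); linarith
    have key1 := arctan_shift hp hpq hδa
    rw [sub_add_cancel, sub_add_cancel] at key1
    have key2 := ih d δ (b - δ a)
      (fun i hi => hδ i (Finset.mem_insert_of_mem hi))
      (fun i hi => by have := hbd i (Finset.mem_insert_of_mem hi); linarith)
      (fun i hi => hpos i (Finset.mem_insert_of_mem hi))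
      (by linarith)
    have harg : b - δ a - ∑ i ∈ s, δ i = b - (δ a + ∑ i ∈ s, δ i) := by ring
    rw [harg] at key2
    linarith

lemma sum_eigs_eq_trace (A : Matrix (Fin n) (Fin n) ℝ) (hA : A.IsHermitian) :
    ∑ i, hA.eigenvalues i = Matrix.trace A := by
  rw [hA.trace_eq_sum_eigenvalues]
  simp

lemma grsHess_isHermitian (a : Fin n → ℝ) (H H' : ℝ) (x : EuclideanSpace ℝ (Fin n)) :
    (grsHess a H H' x).IsHermitian := by
  unfold Matrix.IsHermitian
  ext i j
  simp only [Matrix.conjTranspose_apply, grsHess, Matrix.of_apply, star_trivial]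
  by_cases h : i = j
  · subst h; ring
  · simp [h, Ne.symm h]; ring

lemma qf_grsHess (a : Fin n → ℝ) (H H' : ℝ) (x : EuclideanSpace ℝ (Fin n))
    (u : EuclideanSpace ℝ (Fin n)) :
    qf (grsHess a H H' x) u
      = (∑ j, (a j * H) * u j ^ 2)
        + ((rA a x)⁻¹ * H') * (∑ j, (a j * x j) * u j) ^ 2 := by
  rw [qf_eq_matrix]
  have step : ∀ j k : Fin n, u j * (grsHess a H H' x j k) * u k
      = (if k = j then (a j * H) * u j ^ 2 else 0)
        + ((rA a x)⁻¹ * H') * (((a j * x j) * u j) * ((a k * x k) * u k)) := by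
    intro j k
    by_cases h : j = k
    · subst h; simp [grsHess]; ring
    · simp [grsHess, h, Ne.symm h]; ring
  calc ∑ j, ∑ k, u j * (grsHess a H H' x) j k * u k
      = ∑ j : Fin n, ((a j * H) * u j ^ 2
          + ((rA a x)⁻¹ * H') * (((a j * x j) * u j) * ∑ k, ((a k * x k) * u k))) := by
        refine Finset.sum_congr rfl fun j _ => ?_
        rw [Finset.sum_congr rfl fun k _ => step j k, Finset.sum_add_distrib,
          Finset.sum_ite_eq' Finset.univ j (fun _ => (a j * H) * u j ^ 2),
          if_pos (Finset.mem_univ j), ← Finset.mul_sum, ← Finset.mul_sum]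
    _ = (∑ j, (a j * H) * u j ^ 2) + ((rA a x)⁻¹ * H') * (∑ j, (a j * x j) * u j) ^ 2 := by
        rw [Finset.sum_add_distrib, ← Finset.mul_sum, ← Finset.sum_mul, sq]

lemma trace_grsHess (a : Fin n → ℝ) (H H' : ℝ) (x : EuclideanSpace ℝ (Fin n)) :
    Matrix.trace (grsHess a H H' x)
      = (∑ j, a j * H) + ((rA a x)⁻¹ * H') * (∑ j, (a j) ^ 2 * (x j) ^ 2) := by
  have hd : ∀ j : Fin n, (grsHess a H H' x) j j
      = a j * H + ((rA a x)⁻¹ * H') * ((a j) ^ 2 * (x j) ^ 2) := by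
    intro j; simp [grsHess]; ring
  unfold Matrix.trace Matrix.diag
  rw [Finset.sum_congr rfl fun j _ => hd j, Finset.sum_add_distrib, ← Finset.mul_sum]

end Stmt12Aux
open Stmt12Aux in
/-- eigenvalue estimates for the Hessian of a generalized radially symmetric
function with `h > 0`, `h' ≤ 0`, together with the lower bound for the Lagrangian phase. -/
theorem stmt12
    (n : ℕ) (hn : 0 < n) (a : Fin n → ℝ)
    (hapos : ∀ i, 0 < a i) (hmono : Monotone a)
    (x : EuclideanSpace ℝ (Fin n)) (hx : 0 < rA a x)
    (H H' : ℝ) (hH : 0 < H) (hH' : H' ≤ 0) :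
    (∀ i : Fin n,
      a i * H + (rA a x)⁻¹ * H' * (∑ j, (a j) ^ 2 * (x j) ^ 2)
          ≤ sortedEigs (grsHess a H H' x) i ∧
      sortedEigs (grsHess a H H' x) i ≤ a i * H) ∧
    (∀ ε₀ : ℝ, 0 ≤ ε₀ →
      0 ≤ a ⟨0, hn⟩ * H + a ⟨n - 1, Nat.sub_lt hn one_pos⟩ * rA a x * H' →
      arctan (a ⟨0, hn⟩ * H + a ⟨n - 1, Nat.sub_lt hn one_pos⟩ * rA a x * H')
          + ∑ i ∈ Finset.univ.erase (⟨0, hn⟩ : Fin n),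
              arctan (a i * (H + ε₀ * rA a x * H'))
        ≤ ∑ i, arctan (symEigs (grsHess a H H' x) i)) := by
  have hM : (grsHess a H H' x).IsHermitian := grsHess_isHermitian a H H' x
  have hc : (rA a x)⁻¹ * H' ≤ 0 :=
    mul_nonpos_of_nonneg_of_nonpos (inv_nonneg.mpr hx.le) hH'
  set S : ℝ := ∑ j, (a j) ^ 2 * (x j) ^ 2 with hSdef
  have hS0 : 0 ≤ S := Finset.sum_nonneg fun j _ => by positivity
  -- Part 1, upper bound
  have hupper : ∀ i, sortedEigs (grsHess a H H' x) i ≤ a i * H := by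
    refine sortedEigs_le hM (fun j => a j * H)
      (fun i j hij => mul_le_mul_of_nonneg_right (hmono hij) hH.le) (fun u => ?_)
    rw [qf_grsHess]
    have : ((rA a x)⁻¹ * H') * (∑ j, (a j * x j) * u j) ^ 2 ≤ 0 :=
      mul_nonpos_of_nonpos_of_nonneg hc (sq_nonneg _)
    linarith
  -- Part 1, lower bound
  have hlower : ∀ i, a i * H + ((rA a x)⁻¹ * H') * S ≤ sortedEigs (grsHess a H H' x) i := by
    refine le_sortedEigs hM (fun j => a j * H + ((rA a x)⁻¹ * H') * S)
      (fun i j hij => by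
        have := mul_le_mul_of_nonneg_right (hmono hij) hH.le
        simp only []; linarith) (fun u => ?_)
    rw [qf_grsHess]
    have hCS : (∑ j, (a j * x j) * u j) ^ 2 ≤ S * ∑ j, u j ^ 2 := by
      have h := Finset.sum_mul_sq_le_sq_mul_sq Finset.univ (fun j => a j * x j) (fun j => u j)
      have hSS : ∑ j, (a j * x j) ^ 2 = S := by
        rw [hSdef]; exact Finset.sum_congr rfl fun j _ => by ring
      calc (∑ j, (a j * x j) * u j) ^ 2
          ≤ (∑ j, (a j * x j) ^ 2) * ∑ j, u j ^ 2 := h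
        _ = S * ∑ j, u j ^ 2 := by rw [hSS]
    have hexp : ∑ j, (a j * H + ((rA a x)⁻¹ * H') * S) * u j ^ 2
        = (∑ j, (a j * H) * u j ^ 2) + ((rA a x)⁻¹ * H') * (S * ∑ j, u j ^ 2) := by
      rw [Finset.sum_congr rfl (fun j (_ : j ∈ Finset.univ) =>
        show (a j * H + ((rA a x)⁻¹ * H') * S) * u j ^ 2
          = (a j * H) * u j ^ 2 + (((rA a x)⁻¹ * H') * S) * u j ^ 2 by ring),
        Finset.sum_add_distrib, ← Finset.mul_sum]
      ring
    simp only [] at hexp ⊢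
    rw [hexp]
    have := mul_nonneg (neg_nonneg.mpr hc) (sub_nonneg.mpr hCS)
    nlinarith
  refine ⟨fun i => ⟨hlower i, hupper i⟩, ?_⟩
  -- Part 2
  intro ε₀ hε₀ hsbar
  set i0 : Fin n := ⟨0, hn⟩ with hi0
  set iN : Fin n := ⟨n - 1, Nat.sub_lt hn one_pos⟩ with hiN
  have haN : ∀ j : Fin n, a j ≤ a iN := by
    intro j
    refine hmono ?_
    have := j.isLt
    exact Fin.mk_le_mk.mpr (by omega) |>.trans_eq rfl
  have hr2 : (rA a x) ^ 2 = ∑ j, a j * x j ^ 2 := by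
    rw [rA]; exact Real.sq_sqrt (Finset.sum_nonneg fun j _ => by
      have := (hapos j).le; positivity)
  have hSle : S ≤ a iN * (rA a x) ^ 2 := by
    rw [hr2, Finset.mul_sum, hSdef]
    refine Finset.sum_le_sum fun j _ => ?_
    have h1 := haN j
    have h2 := (hapos j).le
    nlinarith [sq_nonneg (x j), mul_le_mul_of_nonneg_right h1 (mul_nonneg h2 (sq_nonneg (x j)))]
  have hcS : a iN * rA a x * H' ≤ ((rA a x)⁻¹ * H') * S := by
    have h1 : H' * (a iN * (rA a x) ^ 2) ≤ H' * S := by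
      nlinarith
    have h2 : (rA a x)⁻¹ * (H' * (a iN * (rA a x) ^ 2)) = a iN * rA a x * H' := by
      field_simp
    calc a iN * rA a x * H' = (rA a x)⁻¹ * (H' * (a iN * (rA a x) ^ 2)) := h2.symm
      _ ≤ (rA a x)⁻¹ * (H' * S) := by
          exact mul_le_mul_of_nonneg_left h1 (inv_nonneg.mpr hx.le)
      _ = ((rA a x)⁻¹ * H') * S := by ring
  -- trace identity
  have hsumlam : ∑ i, sortedEigs (grsHess a H H' x) i
      = (∑ j, a j * H) + ((rA a x)⁻¹ * H') * S := by
    have e1 : ∑ i, sortedEigs (grsHess a H H' x) i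
        = ∑ i, symEigs (grsHess a H H' x) i :=
      Equiv.sum_comp (Tuple.sort (symEigs (grsHess a H H' x))) (symEigs (grsHess a H H' x))
    have e2 : ∑ i, symEigs (grsHess a H H' x) i = ∑ i, hM.eigenvalues i := by
      refine Finset.sum_congr rfl fun i _ => ?_
      unfold symEigs; rw [dif_pos hM]
    rw [e1, e2, sum_eigs_eq_trace _ hM, trace_grsHess]
  -- telescoping bound
  have hδnn : ∀ i : Fin n, 0 ≤ a i * H - sortedEigs (grsHess a H H' x) i :=
    fun i => sub_nonneg.mpr (hupper i)
  have hlam0 : ∀ i : Fin n, 0 ≤ sortedEigs (grsHess a H H' x) i := by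
    intro i
    have h1 := hlower i
    have h2 : a i0 * H ≤ a i * H :=
      mul_le_mul_of_nonneg_right (hmono (Fin.mk_le_mk.mpr (Nat.zero_le _))) hH.le
    linarith
  have hsumδ : ∑ i : Fin n, (a i * H - sortedEigs (grsHess a H H' x) i)
      = -(((rA a x)⁻¹ * H') * S) := by
    rw [Finset.sum_sub_distrib, hsumlam]; ring
  have htele := tele Finset.univ (fun i => a i * H)
      (fun i => a i * H - sortedEigs (grsHess a H H' x) i) (a i0 * H)
      (fun i _ => hδnn i)
      (fun i _ => mul_le_mul_of_nonneg_right (hmono (Fin.mk_le_mk.mpr (Nat.zero_le _))) hH.le)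
      (fun i _ => by have := hlam0 i; linarith)
      (by rw [hsumδ]; linarith)
  rw [hsumδ] at htele
  simp only [sub_sub_cancel, sub_neg_eq_add] at htele
  -- assemble
  have hrhs : ∑ i, arctan (symEigs (grsHess a H H' x) i)
      = ∑ i, arctan (sortedEigs (grsHess a H H' x) i) :=
    (Equiv.sum_comp (Tuple.sort (symEigs (grsHess a H H' x)))
      (fun i => arctan (symEigs (grsHess a H H' x) i))).symm
  have hdd_split : arctan (a i0 * H) + ∑ i ∈ Finset.univ.erase i0, arctan (a i * H)
      = ∑ i : Fin n, arctan (a i * H) :=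
    Finset.add_sum_erase Finset.univ (fun i => arctan (a i * H)) (Finset.mem_univ i0)
  have hsub_split : ∑ i : Fin n, (arctan (a i * H)
        - arctan (sortedEigs (grsHess a H H' x) i))
      = (∑ i : Fin n, arctan (a i * H))
        - ∑ i : Fin n, arctan (sortedEigs (grsHess a H H' x) i) :=
    Finset.sum_sub_distrib _ _
  have hterm : ∑ i ∈ Finset.univ.erase i0, arctan (a i * (H + ε₀ * rA a x * H'))
      ≤ ∑ i ∈ Finset.univ.erase i0, arctan (a i * H) := by
    refine Finset.sum_le_sum fun i _ => ?_
    refine arctan_strictMono.monotone ?_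
    have h1 : ε₀ * rA a x * H' ≤ 0 :=
      mul_nonpos_of_nonneg_of_nonpos (mul_nonneg hε₀ hx.le) hH'
    nlinarith [(hapos i).le]
  have harct1 : arctan (a i0 * H + a iN * rA a x * H')
      ≤ arctan (a i0 * H + ((rA a x)⁻¹ * H') * S) :=
    arctan_strictMono.monotone (by linarith)
  rw [hsub_split] at htele
  rw [hrhs]
  linarith
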